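/- Let a, v, α, γ ∈ ℝ and let f : ℝ → ℝ be a C⁴ function satisfying f''''(w) − f''(w) = −a·(exp(−w) − 1) for every w ∈ ℝ, with f(0) = 0 and f'(0) = −v. If there exists M ≥ 0 such that |f(w) − (γ·w²/2 + α·w)| ≤ M for all w ≥ 0, then γ = −a and f(w) = (a·w/2)·(exp(−w) − w − 1) + (α + v + a/2)·(exp(−w) + w − 1) − v·w for all w ∈ ℝ. -/

import Mathlib

open Real

private lemma hasDerivAt_expNeg (w : ℝ) :
    HasDerivAt (fun x : ℝ => Real.exp (-x)) (-Real.exp (-w)) w := by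
  simpa using ((hasDerivAt_id w).neg).exp

private lemma const_of_hasDerivAt_zero {g : ℝ → ℝ} (h : ∀ x, HasDerivAt g 0 x) (x : ℝ) :
    g x = g 0 :=
  is_const_of_deriv_eq_zero (fun y => (h y).differentiableAt) (fun y => (h y).deriv) x 0

/-- Abstract solution of q'' = q. -/
private lemma solve_ode {q q1 : ℝ → ℝ} (hq : ∀ w, HasDerivAt q (q1 w) w)
    (hq1 : ∀ w, HasDerivAt q1 (q w) w) :
    ∀ w, q w = ((q 0 + q1 0) / 2) * Real.exp w + ((q 0 - q1 0) / 2) * Real.exp (-w) := by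
  have hr : ∀ x, HasDerivAt (fun y => (q1 y + q y) * Real.exp (-y)) 0 x := by
    intro x
    have := ((hq1 x).add (hq x)).mul (hasDerivAt_expNeg x)
    refine this.congr_deriv ?_
    simp only [Pi.add_apply]
    ring
  have hs : ∀ x, HasDerivAt (fun y => (q1 y - q y) * Real.exp y) 0 x := by
    intro x
    have := ((hq1 x).sub (hq x)).mul (Real.hasDerivAt_exp x)
    refine this.congr_deriv ?_
    simp only [Pi.sub_apply]
    ring
  intro w
  have h1 := const_of_hasDerivAt_zero hr w
  have h2 := const_of_hasDerivAt_zero hs w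
  simp only [neg_zero, Real.exp_zero, mul_one] at h1 h2
  -- h1 : (q1 w + q w) * exp (-w) = q1 0 + q 0
  -- h2 : (q1 w - q w) * exp w = q1 0 - q 0
  have e1 : q1 w + q w = (q1 0 + q 0) * Real.exp w := by
    have hpos := Real.exp_pos w
    rw [Real.exp_neg] at h1
    field_simp at h1
    linarith
  have e2 : q1 w - q w = (q1 0 - q 0) * Real.exp (-w) := by
    rw [← h2, mul_assoc, ← Real.exp_add, add_neg_cancel, Real.exp_zero, mul_one]
  linear_combination (e1 - e2) / 2

/-- If `|c| * w ≤ K` for all `w ≥ 1` then `c = 0`. -/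
private lemma lin_zero {c K : ℝ} (h : ∀ w : ℝ, 1 ≤ w → |c| * w ≤ K) : c = 0 := by
  by_contra hc
  have hc' : 0 < |c| := abs_pos.mpr hc
  have hK : |c| ≤ K := by simpa using h 1 le_rfl
  have hw : (1 : ℝ) ≤ (K + 1) / |c| := by
    rw [le_div_iff₀ hc']
    linarith
  have := h ((K + 1) / |c|) hw
  rw [mul_div_cancel₀ _ (ne_of_gt hc')] at this
  linarith

/-- A quadratic bounded on `[0, ∞)` has zero leading coefficients. -/
private lemma quad_zero {c2 c1 c0 K : ℝ}
    (h : ∀ w : ℝ, 0 ≤ w → |c2 * w ^ 2 + c1 * w + c0| ≤ K) : c2 = 0 ∧ c1 = 0 := by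
  have hc2 : c2 = 0 := by
    have key : ∀ t : ℝ, 1 ≤ t → |c2| * t ≤ 2 * K := by
      intro t ht
      have ht0 : (0 : ℝ) ≤ t := by linarith
      have h1 := abs_le.mp (h t ht0)
      have h2 := abs_le.mp (h (2 * t) (by linarith))
      have h3 := abs_le.mp (h (3 * t) (by linarith))
      have habs : |c2| * t ≤ |c2| * t ^ 2 := by
        have : |c2| * (t * 1) ≤ |c2| * (t * t) := by
          apply mul_le_mul_of_nonneg_left _ (abs_nonneg c2)
          apply mul_le_mul_of_nonneg_left ht ht0
        calc |c2| * t = |c2| * (t * 1) := by ring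
          _ ≤ |c2| * (t * t) := this
          _ = |c2| * t ^ 2 := by ring
      have h2c : |2 * c2 * t ^ 2| ≤ 4 * K := by
        have heq : 2 * c2 * t ^ 2 = (c2 * t ^ 2 + c1 * t + c0)
            - 2 * (c2 * (2 * t) ^ 2 + c1 * (2 * t) + c0)
            + (c2 * (3 * t) ^ 2 + c1 * (3 * t) + c0) := by ring
        rw [heq, abs_le]
        constructor <;> nlinarith [h1.1, h1.2, h2.1, h2.2, h3.1, h3.2]
      have h2c' : |c2| * t ^ 2 ≤ 2 * K := by
        have hsq : (0 : ℝ) ≤ t ^ 2 := by positivity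
        rw [abs_mul, abs_mul, abs_of_nonneg hsq, abs_two] at h2c
        linarith
      linarith
    linarith [lin_zero key]
  refine ⟨hc2, ?_⟩
  subst hc2
  have key : ∀ t : ℝ, 1 ≤ t → |c1| * t ≤ 2 * K := by
    intro t ht
    have ht0 : (0 : ℝ) ≤ t := by linarith
    have h1 := abs_le.mp (h t ht0)
    have h2 := abs_le.mp (h (2 * t) (by linarith))
    have heq : |c1 * t| ≤ 2 * K := by
      have : c1 * t = (0 * (2 * t) ^ 2 + c1 * (2 * t) + c0)
          - (0 * t ^ 2 + c1 * t + c0) := by ring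
      rw [this, abs_le]
      constructor <;> nlinarith [h1.1, h1.2, h2.1, h2.2]
    calc |c1| * t = |c1| * |t| := by rw [abs_of_nonneg ht0]
      _ = |c1 * t| := (abs_mul c1 t).symm
      _ ≤ 2 * K := heq
  exact lin_zero key

/-- If `A e^w + c2 w² + c1 w + c0` is bounded on `[0,∞)` then `A = c2 = c1 = 0`. -/
private lemma exp_quad_zero {A c2 c1 c0 K : ℝ}
    (h : ∀ w : ℝ, 0 ≤ w → |A * Real.exp w + c2 * w ^ 2 + c1 * w + c0| ≤ K) :
    A = 0 ∧ c2 = 0 ∧ c1 = 0 := by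
  have hA : A = 0 := by
    have key : ∀ w : ℝ, 1 ≤ w → |A| * w ≤ 27 * (K + |c2| + |c1| + |c0|) := by
      intro w hw
      have hw0 : (0 : ℝ) ≤ w := by linarith
      have hcube : w ^ 3 / 27 ≤ Real.exp w := by
        have h3 : Real.exp w = Real.exp (w / 3) * Real.exp (w / 3) * Real.exp (w / 3) := by
          rw [← Real.exp_add, ← Real.exp_add]; ring_nf
        have h4 := Real.add_one_le_exp (w / 3)
        have h5 : (0 : ℝ) ≤ w / 3 := by linarith
        have h6 : w / 3 ≤ Real.exp (w / 3) := by linarith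
        calc w ^ 3 / 27 = (w / 3) ^ 3 := by ring
          _ ≤ (Real.exp (w / 3)) ^ 3 := pow_le_pow_left₀ h5 h6 3
          _ = Real.exp w := by rw [h3]; ring
      have hb := abs_le.mp (h w hw0)
      have hAexp : |A| * Real.exp w ≤ K + |c2| * w ^ 2 + |c1| * w + |c0| := by
        have t1 := abs_le.mp (le_refl |c2 * w ^ 2 + c1 * w + c0|)
        have hc2' := abs_le.mp (abs_abs (c2) ▸ le_refl |c2|)
        -- |A * exp w| ≤ K + |c2 w² + c1 w + c0|
        have step : |A * Real.exp w| ≤ K + |c2 * w ^ 2 + c1 * w + c0| := by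
          have := h w hw0
          have htri : |A * Real.exp w| ≤ |A * Real.exp w + c2 * w ^ 2 + c1 * w + c0|
              + |c2 * w ^ 2 + c1 * w + c0| := by
            have htr := abs_sub (A * Real.exp w + c2 * w ^ 2 + c1 * w + c0)
              (c2 * w ^ 2 + c1 * w + c0)
            have he : A * Real.exp w + c2 * w ^ 2 + c1 * w + c0
                - (c2 * w ^ 2 + c1 * w + c0) = A * Real.exp w := by ring
            rwa [he] at htr
          linarith
        have hpoly : |c2 * w ^ 2 + c1 * w + c0| ≤ |c2| * w ^ 2 + |c1| * w + |c0| := by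
          calc |c2 * w ^ 2 + c1 * w + c0| ≤ |c2 * w ^ 2 + c1 * w| + |c0| := abs_add_le _ _
            _ ≤ |c2 * w ^ 2| + |c1 * w| + |c0| := by linarith [abs_add_le (c2 * w ^ 2) (c1 * w)]
            _ = |c2| * w ^ 2 + |c1| * w + |c0| := by
                rw [abs_mul, abs_mul, abs_of_nonneg hw0, abs_of_nonneg (by positivity : (0:ℝ) ≤ w ^ 2)]
        rw [abs_mul, abs_of_pos (Real.exp_pos w)] at step
        linarith
      -- exp w ≥ w^3/27, and w², w, 1 ≤ w² for w ≥ 1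
      have hsq : w ≤ w ^ 2 := by nlinarith
      have hone : (1 : ℝ) ≤ w ^ 2 := by nlinarith
      have final : |A| * (w ^ 3 / 27) ≤ (K + |c2| + |c1| + |c0|) * w ^ 2 := by
        have l1 : |A| * (w ^ 3 / 27) ≤ |A| * Real.exp w :=
          mul_le_mul_of_nonneg_left hcube (abs_nonneg A)
        have l2 : K + |c2| * w ^ 2 + |c1| * w + |c0| ≤ (K + |c2| + |c1| + |c0|) * w ^ 2 := by
          have hK : 0 ≤ K := le_trans (abs_nonneg _) (h 0 le_rfl)
          nlinarith [abs_nonneg c2, abs_nonneg c1, abs_nonneg c0]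
        linarith
      have hw2 : (0 : ℝ) < w ^ 2 := by nlinarith
      -- divide by w^2 : |A| * w / 27 ≤ K'
      nlinarith [final, abs_nonneg A]
    exact lin_zero key
  subst hA
  have h' : ∀ w : ℝ, 0 ≤ w → |c2 * w ^ 2 + c1 * w + c0| ≤ K := by
    intro w hw
    have := h w hw
    simpa using this
  exact ⟨rfl, quad_zero h'⟩

/-- Second-order matching at x = 1 for the inhomogeneous layer equation
    f'''' - f'' = -a·(e^{-w} - 1) with f(0) = 0, f'(0) = -v: boundedness of
    f(w) - (γ·w²/2 + α·w) on [0, ∞) forces γ = -a and determines f. -/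
theorem stmt_9 (a v α γ : ℝ) (f : ℝ → ℝ) (hf : ContDiff ℝ 4 f)
    (hode : ∀ w : ℝ, iteratedDeriv 4 f w - iteratedDeriv 2 f w
      = -a * (Real.exp (-w) - 1))
    (h0 : f 0 = 0) (h1 : deriv f 0 = -v)
    (hbdd : ∃ M : ℝ, 0 ≤ M ∧ ∀ w : ℝ, 0 ≤ w → |f w - (γ * w ^ 2 / 2 + α * w)| ≤ M) :
    γ = -a ∧ ∀ w : ℝ,
      f w = (a * w / 2) * (Real.exp (-w) - w - 1)
        + (α + v + a / 2) * (Real.exp (-w) + w - 1) - v * w := by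
  -- extract differentiability of the first three derivatives
  have hf' := hf
  rw [show (4 : WithTop ℕ∞) = 3 + 1 from rfl, contDiff_succ_iff_deriv] at hf'
  obtain ⟨hd0, -, hf'⟩ := hf'
  rw [show (3 : WithTop ℕ∞) = 2 + 1 from rfl, contDiff_succ_iff_deriv] at hf'
  obtain ⟨hd1, -, hf'⟩ := hf'
  rw [show (2 : WithTop ℕ∞) = 1 + 1 from rfl, contDiff_succ_iff_deriv] at hf'
  obtain ⟨hd2, -, hf'⟩ := hf'
  rw [show (1 : WithTop ℕ∞) = 0 + 1 from rfl, contDiff_succ_iff_deriv] at hf'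
  have hd3 := hf'.1
  set f1 := deriv f with hdf1
  set f2 := deriv f1 with hdf2
  set f3 := deriv f2 with hdf3
  set f4 := deriv f3 with hdf4
  have Hf : ∀ w, HasDerivAt f (f1 w) w := fun w => (hd0 w).hasDerivAt
  have Hf1 : ∀ w, HasDerivAt f1 (f2 w) w := fun w => (hd1 w).hasDerivAt
  have Hf2 : ∀ w, HasDerivAt f2 (f3 w) w := fun w => (hd2 w).hasDerivAt
  have Hf3 : ∀ w, HasDerivAt f3 (f4 w) w := fun w => (hd3 w).hasDerivAt
  have hode' : ∀ w, f4 w = f2 w - a * (Real.exp (-w) - 1) := by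
    intro w
    have h := hode w
    simp only [iteratedDeriv_succ, iteratedDeriv_zero] at h
    rw [← hdf1, ← hdf2, ← hdf3, ← hdf4] at h
    linarith
  -- the layer ODE for q = f'' - particular solution
  set q : ℝ → ℝ := fun w => f2 w - ((a / 2) * w * Real.exp (-w) - a) with hq_def
  set q1 : ℝ → ℝ := fun w => f3 w - (a / 2) * ((1 - w) * Real.exp (-w)) with hq1_def
  have Hq : ∀ w, HasDerivAt q (q1 w) w := by
    intro w
    have hP : HasDerivAt (fun x : ℝ => (a / 2) * x * Real.exp (-x) - a)
        ((a / 2) * ((1 - w) * Real.exp (-w))) w := by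
      have := (((hasDerivAt_id w).const_mul (a / 2)).mul (hasDerivAt_expNeg w)).sub_const a
      refine this.congr_deriv ?_
      try simp only [id_eq]
      ring
    exact (Hf2 w).sub hP
  have Hq1 : ∀ w, HasDerivAt q1 (q w) w := by
    intro w
    have hP : HasDerivAt (fun x : ℝ => (a / 2) * ((1 - x) * Real.exp (-x)))
        ((a / 2) * ((w - 2) * Real.exp (-w))) w := by
      have := (((hasDerivAt_id w).const_sub 1).mul (hasDerivAt_expNeg w)).const_mul (a / 2)
      refine this.congr_deriv ?_
      try simp only [id_eq]
      ring
    have h4 := (Hf3 w).sub hP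
    refine h4.congr_deriv ?_
    simp only [hq_def]
    rw [hode' w]
    ring
  have hq_form := solve_ode Hq Hq1
  set A0 : ℝ := (q 0 + q1 0) / 2 with hA0_def
  set B0 : ℝ := (q 0 - q1 0) / 2 with hB0_def
  have hf2form : ∀ w, f2 w = A0 * Real.exp w + B0 * Real.exp (-w)
      + (a / 2) * w * Real.exp (-w) - a := by
    intro w
    have := hq_form w
    simp only [hq_def] at this
    linarith
  -- integrate once : f1
  set C0 : ℝ := -v - (A0 - B0 - a / 2) with hC0_def
  have hf1form : ∀ w, f1 w = A0 * Real.exp w - B0 * Real.exp (-w)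
      - (a / 2) * ((w + 1) * Real.exp (-w)) - a * w + C0 := by
    have HG : ∀ w, HasDerivAt (fun x : ℝ => A0 * Real.exp x - B0 * Real.exp (-x)
        - (a / 2) * ((x + 1) * Real.exp (-x)) - a * x + C0) (f2 w) w := by
      intro w
      have hG := (((((Real.hasDerivAt_exp w).const_mul A0).sub
          ((hasDerivAt_expNeg w).const_mul B0)).sub
          ((((hasDerivAt_id w).add_const 1).mul (hasDerivAt_expNeg w)).const_mul (a / 2))).sub
          ((hasDerivAt_id w).const_mul a)).add_const C0
      refine hG.congr_deriv ?_
      rw [hf2form w]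
      try simp only [id_eq]
      ring
    have hdiff : ∀ w, HasDerivAt (fun x => f1 x - (A0 * Real.exp x - B0 * Real.exp (-x)
        - (a / 2) * ((x + 1) * Real.exp (-x)) - a * x + C0)) 0 w := by
      intro w
      have := (Hf1 w).sub (HG w)
      exact this.congr_deriv (sub_self _)
    intro w
    have hcon := const_of_hasDerivAt_zero hdiff w
    simp only [neg_zero, Real.exp_zero] at hcon
    have hf10 : f1 0 = -v := h1
    rw [hf10] at hcon
    simp only [hC0_def] at hcon ⊢
    linarith [hcon]
  -- integrate twice : f
  set E0 : ℝ := -(A0 + B0 + a) with hE0_def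
  have hform : ∀ w, f w = A0 * Real.exp w + B0 * Real.exp (-w)
      + (a / 2) * ((w + 2) * Real.exp (-w)) - a * w ^ 2 / 2 + C0 * w + E0 := by
    have HH : ∀ w, HasDerivAt (fun x : ℝ => A0 * Real.exp x + B0 * Real.exp (-x)
        + (a / 2) * ((x + 2) * Real.exp (-x)) - a * x ^ 2 / 2 + C0 * x + E0) (f1 w) w := by
      intro w
      have hG := ((((((Real.hasDerivAt_exp w).const_mul A0).add
          ((hasDerivAt_expNeg w).const_mul B0)).add
          ((((hasDerivAt_id w).add_const 2).mul (hasDerivAt_expNeg w)).const_mul (a / 2))).sub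
          (((hasDerivAt_pow 2 w).const_mul a).div_const 2)).add
          ((hasDerivAt_id w).const_mul C0)).add_const E0
      refine hG.congr_deriv ?_
      rw [hf1form w]
      try simp only [id_eq]
      push_cast
      ring
    have hdiff : ∀ w, HasDerivAt (fun x => f x - (A0 * Real.exp x + B0 * Real.exp (-x)
        + (a / 2) * ((x + 2) * Real.exp (-x)) - a * x ^ 2 / 2 + C0 * x + E0)) 0 w := by
      intro w
      have := (Hf w).sub (HH w)
      exact this.congr_deriv (sub_self _)
    intro w
    have hcon := const_of_hasDerivAt_zero hdiff w
    simp only [neg_zero, Real.exp_zero] at hcon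
    rw [h0] at hcon
    simp only [hE0_def] at hcon ⊢
    linarith [hcon]
  -- boundedness kills the growing parts
  obtain ⟨M, hM0, hM⟩ := hbdd
  have key : ∀ w : ℝ, 0 ≤ w → |A0 * Real.exp w + (-(a + γ) / 2) * w ^ 2 + (C0 - α) * w + E0|
      ≤ M + |B0| + |a| := by
    intro w hw
    have hMw := hM w hw
    have heq : A0 * Real.exp w + (-(a + γ) / 2) * w ^ 2 + (C0 - α) * w + E0
        = (f w - (γ * w ^ 2 / 2 + α * w))
          - (B0 * Real.exp (-w) + (a / 2) * ((w + 2) * Real.exp (-w))) := by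
      rw [hform w]
      ring
    have hexple : Real.exp (-w) ≤ 1 := by
      calc Real.exp (-w) ≤ Real.exp 0 := Real.exp_le_exp.mpr (by linarith)
        _ = 1 := Real.exp_zero
    have hb1 : |B0 * Real.exp (-w)| ≤ |B0| := by
      rw [abs_mul, abs_of_pos (Real.exp_pos _)]
      calc |B0| * Real.exp (-w) ≤ |B0| * 1 :=
            mul_le_mul_of_nonneg_left hexple (abs_nonneg B0)
        _ = |B0| := mul_one _
    have hb2 : |(a / 2) * ((w + 2) * Real.exp (-w))| ≤ |a| := by
      have h2 : (w + 2) * Real.exp (-w) ≤ 2 := by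
        rw [Real.exp_neg, ← div_eq_mul_inv, div_le_iff₀ (Real.exp_pos w)]
        have := Real.add_one_le_exp w
        linarith
      have h2' : 0 ≤ (w + 2) * Real.exp (-w) := by positivity
      rw [abs_mul, abs_of_nonneg h2']
      have : |a / 2| = |a| / 2 := by rw [abs_div]; norm_num
      rw [this]
      calc |a| / 2 * ((w + 2) * Real.exp (-w)) ≤ |a| / 2 * 2 :=
            mul_le_mul_of_nonneg_left h2 (by positivity)
        _ = |a| := by ring
    calc |A0 * Real.exp w + (-(a + γ) / 2) * w ^ 2 + (C0 - α) * w + E0|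
        = |(f w - (γ * w ^ 2 / 2 + α * w))
          - (B0 * Real.exp (-w) + (a / 2) * ((w + 2) * Real.exp (-w)))| := by rw [heq]
      _ ≤ |f w - (γ * w ^ 2 / 2 + α * w)|
          + |B0 * Real.exp (-w) + (a / 2) * ((w + 2) * Real.exp (-w))| := abs_sub _ _
      _ ≤ M + (|B0| + |a|) := by
          have := abs_add_le (B0 * Real.exp (-w)) ((a / 2) * ((w + 2) * Real.exp (-w)))
          linarith
      _ = M + |B0| + |a| := by ring
  obtain ⟨hA0, hc2, hc1⟩ := exp_quad_zero key
  have hγ : γ = -a := by linarith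
  have hC0α : C0 = α := by linarith
  have hB0 : B0 = α + v - a / 2 := by
    rw [hC0_def, hA0] at hC0α
    linarith
  refine ⟨hγ, fun w => ?_⟩
  rw [hform w, hA0, hB0, hC0α, hE0_def, hA0, hB0]
  ring
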